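/- Let R be a ring. If a ∈ √Δ(R), then 1 - a is a unit of R. -/
import Mathlib

/-- Δ(R) = {x : 1 - x*u is a unit for every unit u}. -/
def Delta (R : Type*) [Ring R] : Set R :=
  {x | ∀ u : R, IsUnit u → IsUnit (1 - x * u)}

/-- √Δ(R) = {x : x^n ∈ Δ(R) for some n ≥ 1}. -/
def sqrtDelta (R : Type*) [Ring R] : Set R :=
  {x | ∃ n : ℕ, 1 ≤ n ∧ x ^ n ∈ Delta R}

theorem stmt_1 {R : Type*} [Ring R] (a : R) (ha : a ∈ sqrtDelta R) :
    IsUnit (1 - a) := by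
  obtain ⟨n, hn, hΔ⟩ := ha
  have hu : IsUnit (1 - a ^ n) := by
    simpa using hΔ 1 isUnit_one
  set s := ∑ i ∈ Finset.range n, a ^ i with hs
  have hcomm : Commute (1 - a) s := by
    apply Commute.sub_left (Commute.one_left s)
    exact Commute.sum_right _ _ _ fun i _ => (Commute.refl a).pow_right i
  have hmul : s * (1 - a) = 1 - a ^ n := by
    have := geom_sum_mul a n
    have h2 : s * (a - 1) = a ^ n - 1 := this
    calc s * (1 - a) = -(s * (a - 1)) := by rw [← neg_sub a 1, mul_neg]
    _ = 1 - a ^ n := by rw [h2, neg_sub]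
  have : IsUnit (s * (1 - a)) := hmul ▸ hu
  exact (hcomm.symm.isUnit_mul_iff.mp this).2
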